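/- Kullback–Leibler average of PMFs: let R be a nonempty finite set, let I be a nonempty finite index set, let μ_i (i ∈ I) be strictly positive PMFs on R, and let ω_i ≥ 0 be scalars with ∑_{i∈I} ω_i = 1. Define c := ∑_{t∈R} ∏_{i∈I} μ_i(t)^{ω_i} and μ̄(j) := (1/c) ∏_{i∈I} μ_i(j)^{ω_i} for j ∈ R. Then μ̄ is a strictly positive PMF on R, and for every strictly positive PMF μ on R one has ∑_{i∈I} ω_i D_KL(μ‖μ_i) ≥ −log c, with equality if and only if μ = μ̄; in particular μ̄ is the unique minimizer of μ ↦ ∑_{i∈I} ω_i D_KL(μ‖μ_i) over strictly positive PMFs on R. -/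

import Mathlib

/-- Gibbs' inequality for strictly positive PMFs on a finite type. -/
lemma gibbs_KL {R : Type*} [Fintype R] (ν m : R → ℝ)
    (hν : ∀ j, 0 < ν j) (hm : ∀ j, 0 < m j)
    (hνs : ∑ j, ν j = 1) (hms : ∑ j, m j = 1) :
    0 ≤ ∑ j, ν j * Real.log (ν j / m j) ∧
      ((∑ j, ν j * Real.log (ν j / m j)) = 0 ↔ ν = m) := by
  have hterm : ∀ j, ν j - m j ≤ ν j * Real.log (ν j / m j) := by
    intro j
    have h1 : Real.log (m j / ν j) ≤ m j / ν j - 1 :=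
      Real.log_le_sub_one_of_pos (div_pos (hm j) (hν j))
    have h2 : Real.log (ν j / m j) = - Real.log (m j / ν j) := by
      rw [Real.log_div (hν j).ne' (hm j).ne', Real.log_div (hm j).ne' (hν j).ne']; ring
    have h3 : ν j * (m j / ν j) = m j := by
      rw [mul_comm, div_mul_cancel₀ _ (hν j).ne']
    nlinarith [hν j, h1]
  have hsum : 0 ≤ ∑ j, ν j * Real.log (ν j / m j) := by
    have := Finset.sum_le_sum (s := Finset.univ) (fun j _ => hterm j)
    simp only [Finset.sum_sub_distrib, hνs, hms] at this
    linarith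
  refine ⟨hsum, ?_, ?_⟩
  · intro h
    by_contra hne
    obtain ⟨j0, hj0⟩ := Function.ne_iff.mp hne
    have hstrict : ν j0 - m j0 < ν j0 * Real.log (ν j0 / m j0) := by
      have hne1 : m j0 / ν j0 ≠ 1 := by
        intro habs
        exact hj0 ((div_eq_one_iff_eq (hν j0).ne').mp habs).symm
      have h1 : Real.log (m j0 / ν j0) < m j0 / ν j0 - 1 :=
        Real.log_lt_sub_one_of_pos (div_pos (hm j0) (hν j0)) hne1
      have h2 : Real.log (ν j0 / m j0) = - Real.log (m j0 / ν j0) := by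
        rw [Real.log_div (hν j0).ne' (hm j0).ne', Real.log_div (hm j0).ne' (hν j0).ne']; ring
      have h3 : ν j0 * (m j0 / ν j0) = m j0 := by
        rw [mul_comm, div_mul_cancel₀ _ (hν j0).ne']
      nlinarith [hν j0, h1]
    have := Finset.sum_lt_sum (fun j _ => hterm j) ⟨j0, Finset.mem_univ j0, hstrict⟩
    simp only [Finset.sum_sub_distrib, hνs, hms] at this
    linarith
  · intro h
    subst h
    simp [div_self (hν _).ne']

/-- Kullback-Leibler average of PMFs. `μ̄(j) = (1/c) ∏ μᵢ(j)^ωᵢ`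
is a strictly positive PMF, the weighted KL cost of any strictly positive PMF
`μ` is at least `−log c`, with equality iff `μ = μ̄`; in particular `μ̄` is the
unique minimizer of the weighted KL cost. -/
theorem KL_average_PMF
    {R : Type*} [Fintype R] [Nonempty R]
    {I : Type*} [Fintype I] [Nonempty I]
    (μ : I → R → ℝ) (hμpos : ∀ i j, 0 < μ i j) (hμsum : ∀ i, ∑ j, μ i j = 1)
    (ω : I → ℝ) (hω : ∀ i, 0 ≤ ω i) (hωs : ∑ i, ω i = 1)
    (c : ℝ) (hc : c = ∑ t, ∏ i, μ i t ^ ω i)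
    (μbar : R → ℝ) (hμbar : ∀ j, μbar j = (∏ i, μ i j ^ ω i) / c) :
    (∀ j, 0 < μbar j) ∧ (∑ j, μbar j = 1) ∧
    ∀ ν : R → ℝ, (∀ j, 0 < ν j) → (∑ j, ν j = 1) →
      (-Real.log c ≤ ∑ i, ω i * ∑ j, ν j * Real.log (ν j / μ i j)) ∧
      ((∑ i, ω i * ∑ j, ν j * Real.log (ν j / μ i j)) = -Real.log c ↔ ν = μbar) := by
  have hp : ∀ j, 0 < ∏ i, μ i j ^ ω i := fun j =>
    Finset.prod_pos fun i _ => Real.rpow_pos_of_pos (hμpos i j) _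
  have hcpos : 0 < c := by
    rw [hc]; exact Finset.sum_pos (fun t _ => hp t) Finset.univ_nonempty
  have hbpos : ∀ j, 0 < μbar j := fun j => by
    rw [hμbar j]; exact div_pos (hp j) hcpos
  have hbsum : ∑ j, μbar j = 1 := by
    simp only [hμbar]
    rw [← Finset.sum_div, ← hc, div_self hcpos.ne']
  refine ⟨hbpos, hbsum, fun ν hν hνs => ?_⟩
  have hlogp : ∀ j, Real.log (∏ i, μ i j ^ ω i) = ∑ i, ω i * Real.log (μ i j) := by
    intro j
    rw [Real.log_prod (fun i _ => (Real.rpow_pos_of_pos (hμpos i j) _).ne')]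
    exact Finset.sum_congr rfl fun i _ => Real.log_rpow (hμpos i j) (ω i)
  have key : ∑ i, ω i * ∑ j, ν j * Real.log (ν j / μ i j)
      = (∑ j, ν j * Real.log (ν j / μbar j)) - Real.log c := by
    have swap : ∑ i, ω i * ∑ j, ν j * Real.log (ν j / μ i j)
        = ∑ j, ν j * ∑ i, ω i * Real.log (ν j / μ i j) := by
      simp_rw [Finset.mul_sum]
      rw [Finset.sum_comm]
      exact Finset.sum_congr rfl fun j _ => Finset.sum_congr rfl fun i _ => by ring
    rw [swap]
    have hperj : ∀ j, ν j * ∑ i, ω i * Real.log (ν j / μ i j)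
        = ν j * Real.log (ν j / μbar j) - ν j * Real.log c := by
      intro j
      have h1 : ∑ i, ω i * Real.log (ν j / μ i j)
          = Real.log (ν j) - Real.log (∏ i, μ i j ^ ω i) := by
        have hld : ∀ i, Real.log (ν j / μ i j) = Real.log (ν j) - Real.log (μ i j) :=
          fun i => Real.log_div (hν j).ne' (hμpos i j).ne'
        simp_rw [hld, mul_sub]
        rw [Finset.sum_sub_distrib, ← Finset.sum_mul, hωs, one_mul, hlogp j]
      have h2 : Real.log (μbar j) = Real.log (∏ i, μ i j ^ ω i) - Real.log c := by
        rw [hμbar j, Real.log_div (hp j).ne' hcpos.ne']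
      rw [h1, Real.log_div (hν j).ne' (hbpos j).ne', h2]
      ring
    rw [Finset.sum_congr rfl fun j _ => hperj j, Finset.sum_sub_distrib,
      ← Finset.sum_mul, hνs, one_mul]
  obtain ⟨G1, G2⟩ := gibbs_KL ν μbar hν hbpos hνs hbsum
  rw [key]
  constructor
  · linarith
  · constructor
    · intro h; exact G2.mp (by linarith)
    · intro h; have := G2.mpr h; linarith
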